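/- Let $\A$ be a saturated semi-abelian Fell bundle over $S$ with spectrum $X$ of $C^*(\E)$ and $\A_e\cong C_0(\U_e)$ for idempotents $e$. Then for each $s\in S$ there is a unique homeomorphism $\theta_s\colon\U_{s^*s}\to\U_{ss^*}$ whose restriction to $\mathrm{dom}(a)$ equals $\theta_a$ for each $a\in\A_s$, and $s\mapsto\theta_s$ satisfies $\theta_s\circ\theta_t=\theta_{st}$; i.e., $\theta$ is an action of $S$ on $X$ by partial homeomorphisms. -/

import Mathlib

/-- An inverse semigroup: a semigroup with an involution `star` such that `s (star s) s = s`,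
`(star s) s (star s) = star s`, and idempotents commute (this forces `star s` to be the
unique generalized inverse of `s`). -/
class InverseSemigroup (S : Type*) extends Semigroup S, Star S where
  mul_star_mul : ∀ s : S, s * star s * s = s
  star_mul_star : ∀ s : S, star s * s * star s = star s
  idem_comm : ∀ e f : S, e * e = e → f * f = f → e * f = f * e

/-- The natural partial order on an inverse semigroup: `s ≤ t` iff `s = t (star s) s`. -/
def ISle {S : Type*} [InverseSemigroup S] (s t : S) : Prop := t * (star s * s) = s

/-- A (concrete) Fell bundle over an inverse semigroup `S`: a family of closed subspaces
`fib s` of a C*-algebra `A`, with `fib s * fib t ⊆ fib (s t)`, `(fib s)* ⊆ fib (star s)`,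
and `fib s ⊆ fib t` whenever `s ≤ t`.  (The fibers are thus Banach spaces with a
bilinear associative multiplication `𝒜ₛ × 𝒜ₜ → 𝒜ₛₜ`, a conjugate-linear involution
`𝒜ₛ → 𝒜ₛ*`, isometric inclusions, and the C*-identities hold in `A`.) -/
structure FellBundle (S : Type*) [InverseSemigroup S] (A : Type*)
    [NormedRing A] [StarRing A] [NormedAlgebra ℂ A] where
  fib : S → Submodule ℂ A
  isClosed_fib : ∀ s, IsClosed (fib s : Set A)
  mul_mem : ∀ {s t : S} {a b : A}, a ∈ fib s → b ∈ fib t → a * b ∈ fib (s * t)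
  star_mem : ∀ {s : S} {a : A}, a ∈ fib s → star a ∈ fib (star s)
  incl : ∀ {s t : S}, ISle s t → fib s ≤ fib t

variable {S : Type*} [InverseSemigroup S]
variable {A : Type*} [NormedRing A] [StarRing A] [CStarRing A]
  [NormedAlgebra ℂ A] [StarModule ℂ A] [CompleteSpace A]

/-- A Fell bundle is semi-abelian if each fiber over an idempotent is commutative. -/
def FellBundle.SemiAbelian (𝓑 : FellBundle S A) : Prop :=
  ∀ e : S, e * e = e → ∀ a b : A, a ∈ 𝓑.fib e → b ∈ 𝓑.fib e → a * b = b * a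

/-- A Fell bundle is saturated if `fib (s t)` is the closed linear span of
`fib s * fib t`. -/
def FellBundle.Saturated (𝓑 : FellBundle S A) : Prop :=
  ∀ s t : S, (𝓑.fib (s * t) : Set A) ⊆
    closure (↑(Submodule.span ℂ {x : A | ∃ a ∈ 𝓑.fib s, ∃ b ∈ 𝓑.fib t, x = a * b}) : Set A)

/-- The "restriction to the idempotent semilattice" part of the bundle: the closed linear
span of the fibers over idempotents, a concrete model for `C*(𝓔)`. -/
def FellBundle.EPart (𝓑 : FellBundle S A) : Set A :=
  closure (↑(Submodule.span ℂ (⋃ e ∈ {e : S | e * e = e}, (𝓑.fib e : Set A))) : Set A)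

/-- The open support `𝒰ₑ ⊆ X` of the ideal `𝒜ₑ = C₀(𝒰ₑ)`, expressed via the Gelfand
transform `val` of the idempotent part. -/
def FellBundle.U (𝓑 : FellBundle S A) {X : Type*} (val : A → X → ℂ) (e : S) : Set X :=
  {x : X | ∃ b ∈ 𝓑.fib e, val b x ≠ 0}

namespace ISAux
variable {S : Type*} [InverseSemigroup S]
open InverseSemigroup

lemma gi_unique {t x y : S} (hx1 : t * x * t = t) (hx2 : x * t * x = x)
    (hy1 : t * y * t = t) (hy2 : y * t * y = y) : x = y := by
  have hxt : (x*t)*(x*t) = x*t := by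
    calc (x*t)*(x*t) = x * (t * x * t) := by simp [mul_assoc]
    _ = x * t := by rw [hx1]
  have hyt : (y*t)*(y*t) = y*t := by
    calc (y*t)*(y*t) = y * (t * y * t) := by simp [mul_assoc]
    _ = y * t := by rw [hy1]
  have htx : (t*x)*(t*x) = t*x := by
    calc (t*x)*(t*x) = (t * x * t) * x := by simp [mul_assoc]
    _ = t * x := by rw [hx1]
  have hty : (t*y)*(t*y) = t*y := by
    calc (t*y)*(t*y) = (t * y * t) * y := by simp [mul_assoc]
    _ = t * y := by rw [hy1]
  have h1 : x = x * t * y := by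
    calc x = x * t * x := hx2.symm
    _ = x * (t*y*t) * x := by rw [hy1]
    _ = x * ((t*y)*(t*x)) := by simp [mul_assoc]
    _ = x * ((t*x)*(t*y)) := by rw [idem_comm _ _ htx hty]
    _ = (x*t*x) * (t*y) := by simp [mul_assoc]
    _ = x * (t*y) := by rw [hx2]
    _ = x * t * y := by rw [mul_assoc]
  have h2 : y = x * t * y := by
    calc y = y * t * y := hy2.symm
    _ = y * (t*x*t) * y := by rw [hx1]
    _ = ((y*t)*(x*t)) * y := by simp [mul_assoc]
    _ = ((x*t)*(y*t)) * y := by rw [idem_comm _ _ hxt hyt]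
    _ = x*t*(y*t*y) := by simp [mul_assoc]
    _ = x*t*y := by rw [hy2]
  rw [h1, ← h2]

lemma star_star (s : S) : star (star s) = s :=
  (gi_unique (star_mul_star s) (mul_star_mul s) (mul_star_mul (star s))
    (star_mul_star (star s))).symm

lemma idem_sInv_mul (s : S) : (star s * s) * (star s * s) = star s * s := by
  calc (star s * s) * (star s * s) = star s * (s * star s * s) := by simp [mul_assoc]
  _ = star s * s := by rw [mul_star_mul]

lemma idem_mul_sInv (s : S) : (s * star s) * (s * star s) = s * star s := by
  calc (s * star s) * (s * star s) = (s * star s * s) * star s := by simp [mul_assoc]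
  _ = s * star s := by rw [mul_star_mul]

lemma star_mul (s t : S) : star (s * t) = star t * star s := by
  refine gi_unique (InverseSemigroup.mul_star_mul (s*t)) (star_mul_star (s*t)) ?_ ?_
  · calc s * t * (star t * star s) * (s * t)
        = s * ((t * star t) * (star s * s)) * t := by simp [mul_assoc]
      _ = s * ((star s * s) * (t * star t)) * t := by
          rw [idem_comm _ _ (idem_mul_sInv t) (idem_sInv_mul s)]
      _ = (s * star s * s) * (t * star t * t) := by simp [mul_assoc]
      _ = s * t := by rw [mul_star_mul, mul_star_mul]
  · calc star t * star s * (s * t) * (star t * star s)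
        = star t * ((star s * s) * (t * star t)) * star s := by simp [mul_assoc]
      _ = star t * ((t * star t) * (star s * s)) * star s := by
          rw [idem_comm _ _ (idem_sInv_mul s) (idem_mul_sInv t)]
      _ = (star t * t * star t) * (star s * s * star s) := by simp [mul_assoc]
      _ = star t * star s := by rw [InverseSemigroup.star_mul_star, InverseSemigroup.star_mul_star]

lemma idem_mul {e f : S} (he : e * e = e) (hf : f * f = f) : (e*f)*(e*f) = e*f := by
  calc (e*f)*(e*f) = e * (f * e) * f := by simp [mul_assoc]
  _ = e * (e * f) * f := by rw [← idem_comm _ _ he hf]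
  _ = (e * e) * (f * f) := by simp [mul_assoc]
  _ = e * f := by rw [he, hf]

lemma star_idem {e : S} (he : e * e = e) : star e = e :=
  gi_unique (InverseSemigroup.mul_star_mul e) (InverseSemigroup.star_mul_star e)
    (show e*e*e = e by rw [he, he]) (show e*e*e = e by rw [he, he])

lemma isle_idem_mul {e : S} (he : e * e = e) (t : S) : ISle (e * t) t := by
  unfold ISle
  rw [star_mul, star_idem he]
  calc t * (star t * e * (e * t)) = (t * star t) * ((e * e) * t) := by simp [mul_assoc]
  _ = ((t * star t) * e) * t := by rw [he]; simp [mul_assoc]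
  _ = (e * (t * star t)) * t := by rw [idem_comm _ _ (idem_mul_sInv t) he]
  _ = e * (t * star t * t) := by simp [mul_assoc]
  _ = e * t := by rw [InverseSemigroup.mul_star_mul]

lemma idem_conj {e : S} (he : e * e = e) (s : S) :
    (star s * e * s) * (star s * e * s) = star s * e * s := by
  calc (star s * e * s) * (star s * e * s)
      = star s * ((e * (s * star s)) * (e * s)) := by simp [mul_assoc]
    _ = star s * (((s * star s) * e) * (e * s)) := by rw [idem_comm _ _ he (idem_mul_sInv s)]
    _ = (star s * (s * star s)) * ((e * e) * s) := by simp [mul_assoc]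
    _ = (star s * s * star s) * (e * s) := by rw [he]; simp [mul_assoc]
    _ = star s * (e * s) := by rw [InverseSemigroup.star_mul_star]
    _ = star s * e * s := by rw [mul_assoc]

lemma isle_conj_le {e : S} (he : e * e = e) (t : S) : ISle (star t * e * t) (star t * t) := by
  unfold ISle
  rw [show star (star t * e * t) = star t * e * t by
    rw [star_mul, star_mul, star_star, star_idem he, mul_assoc]]
  calc star t * t * (star t * e * t * (star t * e * t))
      = star t * t * (star t * e * t) := by rw [idem_conj he t]
    _ = star t * (((t * star t) * e) * t) := by simp [mul_assoc]
    _ = star t * ((e * (t * star t)) * t) := by rw [idem_comm _ _ (idem_mul_sInv t) he]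
    _ = star t * e * (t * star t * t) := by simp [mul_assoc]
    _ = star t * e * t := by rw [InverseSemigroup.mul_star_mul]

end ISAux


/-! ### Bundled context -/

structure BEData (S : Type*) [InverseSemigroup S] (A : Type*) [NormedRing A] [StarRing A]
    [CStarRing A] [NormedAlgebra ℂ A] [StarModule ℂ A] [CompleteSpace A]
    (X : Type*) [TopologicalSpace X] where
  FB : FellBundle S A
  val : A → X → ℂ
  tha : A → X → X
  hsat : FB.Saturated
  hval_add : ∀ {e : S} {a b : A}, e * e = e → a ∈ FB.fib e → b ∈ FB.fib e →
      ∀ x, val (a + b) x = val a x + val b x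
  hval_smul : ∀ {e : S} {a : A} (c : ℂ), e * e = e → a ∈ FB.fib e →
      ∀ x, val (c • a) x = c * val a x
  hval_mul : ∀ {e f : S} {a b : A}, e * e = e → f * f = f → a ∈ FB.fib e → b ∈ FB.fib f →
      ∀ x, val (a * b) x = val a x * val b x
  hval_star : ∀ {e : S} {a : A}, e * e = e → a ∈ FB.fib e →
      ∀ x, val (star a) x = (starRingEnd ℂ) (val a x)
  hval_inj : ∀ {e : S} {a b : A}, e * e = e → a ∈ FB.fib e → b ∈ FB.fib e →
      (∀ x, val a x = val b x) → a = b
  hval_sep : ∀ x y : X,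
      (∀ (e : S) (b : A), e * e = e → b ∈ FB.fib e → val b x = val b y) → x = y
  hval_pos : ∀ {s : S} {a : A}, a ∈ FB.fib s →
      ∀ x, (val (star a * a) x).im = 0 ∧ 0 ≤ (val (star a * a) x).re
  hval_cont : ∀ {e : S} {b : A}, e * e = e → b ∈ FB.fib e → Continuous (val b)
  htha : ∀ {s : S} {a : A}, a ∈ FB.fib s → ∀ x : X, 0 < (val (star a * a) x).re →
      ∀ {e : S} {b : A}, e * e = e → b ∈ FB.fib e →
        val (star a * b * a) x = val (star a * a) x * val b (tha a x)
  htha_cont : ∀ {s : S} {a : A}, a ∈ FB.fib s →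
      ContinuousOn (tha a) {x : X | 0 < (val (star a * a) x).re}
  htha_inv : ∀ {s : S} {a : A}, a ∈ FB.fib s → ∀ x : X, 0 < (val (star a * a) x).re →
      0 < (val (a * star a) (tha a x)).re ∧ tha (star a) (tha a x) = x

namespace BEData

variable {S : Type*} [InverseSemigroup S]
  {A : Type*} [NormedRing A] [StarRing A] [CStarRing A]
  [NormedAlgebra ℂ A] [StarModule ℂ A] [CompleteSpace A]
  {X : Type*} [TopologicalSpace X]
  (C : BEData S A X)

/-- star of an element of an idempotent fiber stays there. -/
lemma fib_star {e : S} {a : A} (he : e * e = e) (ha : a ∈ C.FB.fib e) :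
    star a ∈ C.FB.fib e := by
  have := C.FB.star_mem ha
  rwa [ISAux.star_idem he] at this

lemma fib_mul_idem {e : S} {a b : A} (he : e * e = e) (ha : a ∈ C.FB.fib e)
    (hb : b ∈ C.FB.fib e) : a * b ∈ C.FB.fib e := by
  have := C.FB.mul_mem ha hb
  rwa [he] at this

lemma val_zero {e : S} (he : e * e = e) (x : X) : C.val 0 x = 0 := by
  have h0 : (0 : A) ∈ C.FB.fib e := zero_mem _
  have := C.hval_add he h0 h0 x
  rw [add_zero] at this
  linear_combination -this

lemma val_sub {e : S} {a b : A} (he : e * e = e) (ha : a ∈ C.FB.fib e)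
    (hb : b ∈ C.FB.fib e) (x : X) : C.val (a - b) x = C.val a x - C.val b x := by
  have := C.hval_add he (sub_mem ha hb) hb x
  rw [sub_add_cancel] at this
  linear_combination -this

lemma val_real {s : S} {a : A} (ha : a ∈ C.FB.fib s) (x : X) :
    C.val (star a * a) x = (((C.val (star a * a) x).re : ℝ) : ℂ) :=
  Complex.ext rfl (by simp [(C.hval_pos ha x).1])

lemma val_star_mul_self {e : S} {b : A} (he : e * e = e) (hb : b ∈ C.FB.fib e) (x : X) :
    C.val (star b * b) x = ((‖C.val b x‖ ^ 2 : ℝ) : ℂ) := by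
  rw [C.hval_mul he he (C.fib_star he hb) hb x, C.hval_star he hb x, Complex.conj_mul']
  norm_cast

lemma fib_pow {e : S} {a : A} (he : e * e = e) (ha : a ∈ C.FB.fib e) (n : ℕ) :
    a ^ (n + 1) ∈ C.FB.fib e := by
  induction n with
  | zero => simpa using ha
  | succ n ih => rw [pow_succ]; exact C.fib_mul_idem he ih ha

/-- The Gelfand character is norm-bounded on idempotent fibers. -/
lemma bound {e : S} {b : A} (he : e * e = e) (hb : b ∈ C.FB.fib e) (x : X) :
    ‖C.val b x‖ ≤ ‖b‖ := by
  set z := C.val b x with hz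
  have hstarb := C.fib_star he hb
  have hc : star b * b ∈ C.FB.fib e := C.fib_mul_idem he hstarb hb
  have hpos := C.hval_pos hb x
  set t := (C.val (star b * b) x).re with ht
  have hval_c : C.val (star b * b) x = ((t : ℝ) : ℂ) := C.val_real hb x
  have hzsq : ((‖z‖ ^ 2 : ℝ) : ℂ) = ((t : ℝ) : ℂ) := by
    rw [← hval_c, C.val_star_mul_self he hb x]
  have hzsq' : ‖z‖ ^ 2 = t := by exact_mod_cast hzsq
  have hkey : t ≤ ‖star b * b‖ := by
    by_contra hlt
    push_neg at hlt
    have ht0 : 0 < t := lt_of_le_of_lt (norm_nonneg _) hlt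
    have htC : ((t : ℝ) : ℂ) ≠ 0 := by exact_mod_cast ht0.ne'
    set c := star b * b with hcdef
    set x0 : A := (((t : ℝ) : ℂ))⁻¹ • c with hx0
    have hx0norm : ‖x0‖ < 1 := by
      rw [hx0, norm_smul, norm_inv]
      have h1 : ‖((t : ℝ) : ℂ)‖ = t := by
        rw [Complex.norm_real, Real.norm_of_nonneg ht0.le]
      rw [h1]
      rw [inv_mul_lt_one₀ ht0]
      exact hlt
    have hsumg : Summable (fun n : ℕ => x0 ^ n) := summable_geometric_of_norm_lt_one hx0norm
    have hsum : Summable (fun n : ℕ => x0 ^ (n + 1)) := (summable_nat_add_iff 1).2 hsumg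
    set r := ∑' n : ℕ, x0 ^ (n + 1) with hr
    have hx0fib : x0 ∈ C.FB.fib e := Submodule.smul_mem _ _ hc
    have hrfib : r ∈ C.FB.fib e := by
      refine (C.FB.isClosed_fib e).mem_of_tendsto hsum.hasSum.tendsto_sum_nat
        (Filter.Eventually.of_forall fun n => ?_)
      exact Submodule.sum_mem _ fun i _ => C.fib_pow he hx0fib i
    have hr_eq : r = x0 + x0 * r := by
      have h1 : r = x0 ^ 1 + ∑' n : ℕ, x0 ^ (n + 2) := Summable.tsum_eq_zero_add hsum
      have h2 : x0 * r = ∑' n : ℕ, x0 ^ (n + 2) := by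
        rw [hr, ← Summable.tsum_mul_left x0 hsum]
        congr 1; funext n; rw [← pow_succ']
      conv_lhs => rw [h1]
      rw [h2, pow_one]
    have hval_x0 : C.val x0 x = 1 := by
      rw [hx0, C.hval_smul _ he hc x, hval_c, inv_mul_cancel₀ htC]
    have hcontra : C.val r x = C.val x0 x + C.val x0 x * C.val r x := by
      conv_lhs => rw [hr_eq]
      rw [C.hval_add he hx0fib (C.fib_mul_idem he hx0fib hrfib) x,
        C.hval_mul he he hx0fib hrfib x]
    rw [hval_x0, one_mul] at hcontra
    exact one_ne_zero (right_eq_add.mp hcontra)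
  have h2 : ‖star b * b‖ = ‖b‖ * ‖b‖ := CStarRing.norm_star_mul_self
  nlinarith [norm_nonneg z, norm_nonneg b]

/-- Elements of idempotent fibers commute. -/
lemma fib_comm {e f : S} {u v : A} (he : e * e = e) (hf : f * f = f)
    (hu : u ∈ C.FB.fib e) (hv : v ∈ C.FB.fib f) : u * v = v * u := by
  have hef : (e * f) * (e * f) = e * f := ISAux.idem_mul he hf
  have huv : u * v ∈ C.FB.fib (e * f) := C.FB.mul_mem hu hv
  have hvu : v * u ∈ C.FB.fib (e * f) := by
    have := C.FB.mul_mem hv hu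
    rwa [InverseSemigroup.idem_comm f e hf he] at this
  exact C.hval_inj hef huv hvu fun x => by
    rw [C.hval_mul he hf hu hv x, C.hval_mul hf he hv hu x, mul_comm]

/-- If the character vanishes on a set of elements of an idempotent fiber, it
vanishes on the closed span. -/
lemma vanish {e : S} (he : e * e = e) {T : Set A} (hT : T ⊆ (C.FB.fib e : Set A))
    (x : X) (hv : ∀ y ∈ T, C.val y x = 0) {b : A}
    (hb : b ∈ closure ((Submodule.span ℂ T : Submodule ℂ A) : Set A)) : C.val b x = 0 := by
  have hspan_le : Submodule.span ℂ T ≤ C.FB.fib e := Submodule.span_le.2 hT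
  have hbfib : b ∈ C.FB.fib e :=
    closure_minimal hspan_le (C.FB.isClosed_fib e) hb
  have hspan0 : ∀ y ∈ Submodule.span ℂ T, C.val y x = 0 := by
    intro y hy
    induction hy using Submodule.span_induction with
    | mem y hy => exact hv y hy
    | zero => exact C.val_zero he x
    | add u w hu hw ihu ihw =>
        rw [C.hval_add he (hspan_le hu) (hspan_le hw) x, ihu, ihw, add_zero]
    | smul c u hu ih => rw [C.hval_smul c he (hspan_le hu) x, ih, mul_zero]
  by_contra hne
  have hpos : 0 < ‖C.val b x‖ := norm_pos_iff.2 hne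
  obtain ⟨y, hy, hdist⟩ := Metric.mem_closure_iff.1 hb _ hpos
  have heq : ‖C.val b x‖ = ‖C.val (b - y) x‖ := by
    rw [C.val_sub he hbfib (hspan_le hy) x, hspan0 y hy, sub_zero]
  have hle := C.bound he (sub_mem hbfib (hspan_le hy)) x
  rw [dist_eq_norm] at hdist
  linarith [heq, hle, hdist]


/-- Cauchy–Schwarz for the positive sesquilinear form `(u,v) ↦ val (u* v) x` on a fiber. -/
lemma cs {s : S} {u v : A} (hu : u ∈ C.FB.fib s) (hv : v ∈ C.FB.fib s) (x : X) :
    ‖C.val (star u * v) x‖ ^ 2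
      ≤ (C.val (star u * u) x).re * (C.val (star v * v) x).re := by
  have he : (star s * s) * (star s * s) = star s * s := ISAux.idem_sInv_mul s
  set β := C.val (star u * v) x with hβdef
  set p := (C.val (star u * u) x).re with hpdef
  set q := (C.val (star v * v) x).re with hqdef
  set nb := ‖β‖ ^ 2 with hnb
  have hp0 : 0 ≤ p := (C.hval_pos hu x).2
  have hq0 : 0 ≤ q := (C.hval_pos hv x).2
  have hnb0 : 0 ≤ nb := sq_nonneg _
  have muv : star u * v ∈ C.FB.fib (star s * s) := C.FB.mul_mem (C.FB.star_mem hu) hv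
  have mvu : star v * u ∈ C.FB.fib (star s * s) := C.FB.mul_mem (C.FB.star_mem hv) hu
  have muu : star u * u ∈ C.FB.fib (star s * s) := C.FB.mul_mem (C.FB.star_mem hu) hu
  have mvv : star v * v ∈ C.FB.fib (star s * s) := C.FB.mul_mem (C.FB.star_mem hv) hv
  have hconjβ : C.val (star v * u) x = (starRingEnd ℂ) β := by
    have h1 := C.hval_star he muv x
    rw [show star (star u * v) = star v * u by rw [star_mul, star_star]] at h1
    rw [h1]
  have hX : (starRingEnd ℂ) β * β = ((nb : ℝ) : ℂ) := by
    rw [Complex.conj_mul']; norm_cast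
  have hY : β * (starRingEnd ℂ) β = ((nb : ℝ) : ℂ) := by
    rw [mul_comm]; exact hX
  have hexp : ∀ r : ℝ, 0 ≤ p - 2 * r * nb + r ^ 2 * (nb * q) := by
    intro r
    set lc : ℂ := -(r : ℂ) * (starRingEnd ℂ) β with hlc
    have hw : u + lc • v ∈ C.FB.fib s := add_mem hu (Submodule.smul_mem _ _ hv)
    have hexpand : star (u + lc • v) * (u + lc • v)
        = star u * u + lc • (star u * v) + ((starRingEnd ℂ) lc) • (star v * u)
          + (lc * ((starRingEnd ℂ) lc)) • (star v * v) := by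
      rw [star_add, star_smul]
      simp only [add_mul, mul_add, smul_add, smul_mul_assoc, mul_smul_comm, smul_smul,
        RCLike.star_def]
      abel
    have hpos := (C.hval_pos hw x).2
    have hvalw : C.val (star (u + lc • v) * (u + lc • v)) x
        = ((p : ℝ) : ℂ) + lc * β + ((starRingEnd ℂ) lc) * ((starRingEnd ℂ) β)
          + (lc * ((starRingEnd ℂ) lc)) * ((q : ℝ) : ℂ) := by
      rw [hexpand]
      have m2 : lc • (star u * v) ∈ C.FB.fib (star s * s) := Submodule.smul_mem _ _ muv
      have m3 : ((starRingEnd ℂ) lc) • (star v * u) ∈ C.FB.fib (star s * s) :=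
        Submodule.smul_mem _ _ mvu
      have m4 : (lc * ((starRingEnd ℂ) lc)) • (star v * v) ∈ C.FB.fib (star s * s) :=
        Submodule.smul_mem _ _ mvv
      rw [C.hval_add he (add_mem (add_mem muu m2) m3) m4 x,
        C.hval_add he (add_mem muu m2) m3 x, C.hval_add he muu m2 x,
        C.hval_smul _ he muv x, C.hval_smul _ he mvu x, C.hval_smul _ he mvv x,
        ← hβdef, hconjβ, C.val_real hu x, C.val_real hv x, ← hpdef, ← hqdef]
    have hcast : C.val (star (u + lc • v) * (u + lc • v)) x
        = (((p - 2 * r * nb + r ^ 2 * (nb * q) : ℝ)) : ℂ) := by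
      rw [hvalw, hlc]
      have hc1 : (starRingEnd ℂ) (-(r : ℂ) * (starRingEnd ℂ) β) = -(r : ℂ) * β := by
        simp
      rw [hc1]
      push_cast
      linear_combination (-(r:ℂ) + (r:ℂ)^2 * (q:ℂ)) * hX + (-(r:ℂ)) * hY
    rw [hcast] at hpos
    rwa [Complex.ofReal_re] at hpos
  show nb ≤ p * q
  rcases eq_or_lt_of_le hq0 with hq | hq
  · rcases eq_or_lt_of_le hnb0 with hnbz | hnbz
    · nlinarith
    · exfalso
      have h := hexp ((p + 1) / (2 * nb))
      rw [← hq] at h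
      have h2 : 2 * ((p + 1) / (2 * nb)) * nb = p + 1 := by
        field_simp
      nlinarith
  · have h := hexp q⁻¹
    have e1 : p - 2 * q⁻¹ * nb + (q⁻¹) ^ 2 * (nb * q) = p - q⁻¹ * nb := by
      field_simp
      ring
    rw [e1] at h
    have h2 : q⁻¹ * nb * q ≤ p * q :=
      mul_le_mul_of_nonneg_right (by linarith) hq.le
    have e2 : q⁻¹ * nb * q = nb := by
      field_simp
    linarith [e2 ▸ h2]


/-- `φ(b* p b) ≤ ‖p‖ φ(b* b)` for `p = c* c`. -/
lemma conj_bound {s t : S} {c b : A} (hc : c ∈ C.FB.fib s) (hb : b ∈ C.FB.fib t) (x : X) :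
    (C.val (star b * (star c * c) * b) x).re
      ≤ ‖star c * c‖ * (C.val (star b * b) x).re := by
  classical
  set p := star c * c with hpdef
  have hfidem : (star s * s) * (star s * s) = star s * s := ISAux.idem_sInv_mul s
  have hpfib : p ∈ C.FB.fib (star s * s) := C.FB.mul_mem (C.FB.star_mem hc) hc
  have hps : star p = p := by rw [hpdef, star_mul, star_star]
  have hincl : C.FB.fib ((star s * s) * t) ≤ C.FB.fib t :=
    C.FB.incl (ISAux.isle_idem_mul hfidem t)
  have hpmb : ∀ m : ℕ, p ^ m * b ∈ C.FB.fib t := by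
    intro m
    cases m with
    | zero => simpa using hb
    | succ m => exact hincl (C.FB.mul_mem (C.fib_pow hfidem hpfib m) hb)
  -- the key regrouping identity
  have heq : ∀ i j : ℕ, star (p ^ i * b) * (p ^ j * b) = star b * p ^ (i + j) * b := by
    intro i j
    rw [star_mul, star_pow, hps, pow_add]
    simp [mul_assoc]
  set r : ℕ → ℝ := fun n => (C.val (star b * p ^ n * b) x).re with hrdef
  -- each `star b * p^n * b` is of the form `a* a`
  have hsd : ∀ n : ℕ, ∃ (w : S) (aw : A), aw ∈ C.FB.fib w ∧
      star b * p ^ n * b = star aw * aw := by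
    intro n
    rcases Nat.even_or_odd n with ⟨m, hm⟩ | ⟨m, hm⟩
    · refine ⟨t, p ^ m * b, hpmb m, ?_⟩
      rw [heq m m, hm]
    · refine ⟨s * t, c * (p ^ m * b), C.FB.mul_mem hc (hpmb m), ?_⟩
      rw [show star (c * (p ^ m * b)) * (c * (p ^ m * b))
          = star (p ^ m * b) * (star c * c) * (p ^ m * b) by
        rw [star_mul]; simp [mul_assoc]]
      rw [← hpdef, star_mul, star_pow, hps, hm]
      rw [show 2 * m + 1 = m + (1 + m) by ring, pow_add, pow_add, pow_one]
      simp [mul_assoc]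
  have hrval : ∀ n : ℕ, C.val (star b * p ^ n * b) x = ((r n : ℝ) : ℂ) := by
    intro n
    obtain ⟨w, aw, hawfib, haw⟩ := hsd n
    simp only [hrdef]
    rw [haw]
    exact C.val_real hawfib x
  have hr0 : ∀ n : ℕ, 0 ≤ r n := by
    intro n
    obtain ⟨w, aw, hawfib, haw⟩ := hsd n
    simp only [hrdef]
    rw [haw]
    exact (C.hval_pos hawfib x).2
  -- the Cauchy–Schwarz step
  have hrcs : ∀ i j : ℕ, r (i + j) ^ 2 ≤ r (2 * i) * r (2 * j) := by
    intro i j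
    have h := C.cs (hpmb i) (hpmb j) x
    rw [heq i j, heq i i, heq j j] at h
    rw [hrval (i + j)] at h
    have : ‖((r (i+j) : ℝ) : ℂ)‖ ^ 2 = r (i + j) ^ 2 := by
      rw [Complex.norm_real, Real.norm_eq_abs, sq_abs]
    rw [this] at h
    have h2i : (2 : ℕ) * i = i + i := by ring
    have h2j : (2 : ℕ) * j = j + j := by ring
    rw [h2i, h2j]
    exact h
  -- the norm bound
  have hmemT : ∀ n : ℕ, star b * p ^ n * b ∈ C.FB.fib (star t * t) := by
    intro n
    have := C.FB.mul_mem (C.FB.star_mem hb) (hpmb n)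
    rwa [show star b * (p ^ n * b) = star b * p ^ n * b by rw [mul_assoc]] at this
  have hrbound : ∀ n : ℕ, r (n + 1) ≤ ‖b‖ ^ 2 * ‖p‖ ^ (n + 1) := by
    intro n
    have h1 : r (n + 1) ≤ ‖C.val (star b * p ^ (n+1) * b) x‖ := by
      rw [hrval (n+1), Complex.norm_real, Real.norm_eq_abs]
      exact le_abs_self _
    have h2 := C.bound (ISAux.idem_sInv_mul t) (hmemT (n+1)) x
    have h3 : ‖star b * p ^ (n+1) * b‖ ≤ ‖b‖ ^ 2 * ‖p‖ ^ (n + 1) := by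
      calc ‖star b * p ^ (n+1) * b‖ ≤ ‖star b * p ^ (n+1)‖ * ‖b‖ := norm_mul_le _ _
        _ ≤ ‖star b‖ * ‖p ^ (n+1)‖ * ‖b‖ :=
            mul_le_mul_of_nonneg_right (norm_mul_le _ _) (norm_nonneg _)
        _ ≤ ‖star b‖ * ‖p‖ ^ (n+1) * ‖b‖ :=
            mul_le_mul_of_nonneg_right
              (mul_le_mul_of_nonneg_left (norm_pow_le' p (Nat.succ_pos n)) (norm_nonneg _))
              (norm_nonneg _)
        _ = ‖b‖ ^ 2 * ‖p‖ ^ (n + 1) := by rw [norm_star]; ring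
    linarith
  -- iteration
  have hiter : ∀ k : ℕ, r 1 ^ (2 ^ k) ≤ r 0 ^ (2 ^ k - 1) * r (2 ^ k) := by
    intro k
    induction k with
    | zero => simp
    | succ k ih =>
        have h1 : r 1 ^ (2 ^ (k+1)) = (r 1 ^ (2 ^ k)) ^ 2 := by
          rw [pow_succ, pow_mul]
        have h2 : (r 1 ^ (2 ^ k)) ^ 2 ≤ (r 0 ^ (2 ^ k - 1) * r (2 ^ k)) ^ 2 := by
          apply pow_le_pow_left₀ (pow_nonneg (hr0 1) _) ih
        have h3 : (r 0 ^ (2 ^ k - 1) * r (2 ^ k)) ^ 2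
            = r 0 ^ (2 ^ k - 1) * r 0 ^ (2 ^ k - 1) * (r (2 ^ k)) ^ 2 := by ring
        have h4 : (r (2 ^ k)) ^ 2 ≤ r 0 * r (2 ^ (k+1)) := by
          have := hrcs 0 (2 ^ k)
          rw [zero_add, mul_zero] at this
          rw [show (2:ℕ) ^ (k+1) = 2 * 2 ^ k by ring]
          exact this
        have h5 : r 0 ^ (2 ^ k - 1) * r 0 ^ (2 ^ k - 1) * (r (2 ^ k)) ^ 2
            ≤ r 0 ^ (2 ^ k - 1) * r 0 ^ (2 ^ k - 1) * (r 0 * r (2 ^ (k+1))) := by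
          exact mul_le_mul_of_nonneg_left h4
            (mul_nonneg (pow_nonneg (hr0 0) _) (pow_nonneg (hr0 0) _))
        have h6 : r 0 ^ (2 ^ k - 1) * r 0 ^ (2 ^ k - 1) * (r 0 * r (2 ^ (k+1)))
            = r 0 ^ (2 ^ (k+1) - 1) * r (2 ^ (k+1)) := by
          have hexpo : (2 ^ k - 1) + (2 ^ k - 1) + 1 = 2 ^ (k+1) - 1 := by
            have : 1 ≤ 2 ^ k := Nat.one_le_two_pow
            omega
          calc r 0 ^ (2 ^ k - 1) * r 0 ^ (2 ^ k - 1) * (r 0 * r (2 ^ (k+1)))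
              = (r 0 ^ (2 ^ k - 1) * r 0 ^ (2 ^ k - 1) * r 0 ^ 1) * r (2 ^ (k+1)) := by ring
            _ = r 0 ^ ((2 ^ k - 1) + (2 ^ k - 1) + 1) * r (2 ^ (k+1)) := by
                rw [← pow_add, ← pow_add]
            _ = r 0 ^ (2 ^ (k+1) - 1) * r (2 ^ (k+1)) := by rw [hexpo]
        linarith
  -- conclude
  have hgoal : r 1 ≤ ‖p‖ * r 0 := by
    by_cases hM : ‖p‖ = 0
    · have hp0 : p = 0 := norm_eq_zero.mp hM
      have : star b * p ^ 1 * b = 0 := by rw [pow_one, hp0]; simp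
      have hr1 : r 1 = 0 := by
        simp only [hrdef]
        rw [this, C.val_zero hfidem x, Complex.zero_re]
      rw [hr1, hM]
      simp
    · have hMpos : 0 < ‖p‖ := lt_of_le_of_ne (norm_nonneg p) (Ne.symm hM)
      by_cases hr0z : r 0 = 0
      · have h1 := hiter 1
        norm_num at h1
        rw [hr0z] at h1
        simp at h1
        have hr1z : r 1 = 0 := by nlinarith [hr0 1, hr0 2, sq_nonneg (r 1)]
        rw [hr1z, hr0z]
        simp
      · have hr0pos : 0 < r 0 := lt_of_le_of_ne (hr0 0) (Ne.symm hr0z)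
        by_contra hlt
        push_neg at hlt
        set ρ := r 1 / (‖p‖ * r 0) with hρdef
        have hρ : 1 < ρ := by
          rw [hρdef, lt_div_iff₀ (by positivity)]
          linarith
        have hk : ∀ k : ℕ, ρ ^ (2 ^ k) ≤ ‖b‖ ^ 2 / r 0 := by
          intro k
          have h1 := hiter k
          have h2 : r (2 ^ k) ≤ ‖b‖ ^ 2 * ‖p‖ ^ (2 ^ k) := by
            have : 2 ^ k = (2 ^ k - 1) + 1 := by
              have : 1 ≤ 2 ^ k := Nat.one_le_two_pow
              omega
            rw [this]
            exact hrbound _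
          have h3 : r 1 ^ (2 ^ k) ≤ r 0 ^ (2 ^ k - 1) * (‖b‖ ^ 2 * ‖p‖ ^ (2 ^ k)) := by
            calc r 1 ^ (2 ^ k) ≤ r 0 ^ (2 ^ k - 1) * r (2 ^ k) := h1
             _ ≤ r 0 ^ (2 ^ k - 1) * (‖b‖ ^ 2 * ‖p‖ ^ (2 ^ k)) := by
                apply mul_le_mul_of_nonneg_left h2; positivity
          rw [hρdef, div_pow, div_le_div_iff₀ (by positivity) hr0pos]
          calc r 1 ^ 2 ^ k * r 0 ≤ (r 0 ^ (2 ^ k - 1) * (‖b‖ ^ 2 * ‖p‖ ^ (2 ^ k))) * r 0 := by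
                apply mul_le_mul_of_nonneg_right h3 hr0pos.le
            _ = ‖b‖ ^ 2 * (‖p‖ ^ (2 ^ k) * (r 0 ^ (2 ^ k - 1) * r 0)) := by ring
            _ = ‖b‖ ^ 2 * (‖p‖ * r 0) ^ 2 ^ k := by
                rw [← pow_succ]
                have h4 : 2 ^ k - 1 + 1 = 2 ^ k := by
                  have : 1 ≤ 2 ^ k := Nat.one_le_two_pow
                  omega
                rw [h4, mul_pow]
        obtain ⟨k, hk2⟩ := pow_unbounded_of_one_lt (‖b‖ ^ 2 / r 0) hρ
        have h5 : ρ ^ k ≤ ρ ^ (2 ^ k) := pow_le_pow_right₀ hρ.le (Nat.lt_two_pow_self (n := k)).le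
        linarith [hk k]
  have e1 : r 1 = (C.val (star b * p * b) x).re := by
    simp only [hrdef, pow_one]
  have e0 : r 0 = (C.val (star b * b) x).re := by
    simp only [hrdef, pow_zero, mul_one]
  rw [← e1, ← e0]
  exact hgoal


/-- The domain of `θ_a`. -/
def domA (a : A) : Set X := {x : X | 0 < (C.val (star a * a) x).re}

lemma ne_zero_of_re_pos {z : ℂ} (h : 0 < z.re) : z ≠ 0 := by
  intro hz; rw [hz] at h; simp at h

lemma memU_of_dom {s : S} {a : A} (ha : a ∈ C.FB.fib s) {x : X} (hx : x ∈ C.domA a) :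
    x ∈ C.FB.U C.val (star s * s) :=
  ⟨star a * a, C.FB.mul_mem (C.FB.star_mem ha) ha,
    ne_zero_of_re_pos hx⟩

/-- Key saturation consequence: points of `U (s* s)` lie in the domain of some `θ_a`. -/
lemma exists_dom {s : S} {x : X} (hx : x ∈ C.FB.U C.val (star s * s)) :
    ∃ a ∈ C.FB.fib s, x ∈ C.domA a := by
  obtain ⟨b0, hb0, hb0ne⟩ := hx
  by_contra hcon
  push_neg at hcon
  have he : (star s * s) * (star s * s) = star s * s := ISAux.idem_sInv_mul s
  set T : Set A := {y : A | ∃ a' ∈ C.FB.fib (star s), ∃ a ∈ C.FB.fib s, y = a' * a} with hT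
  have hTfib : T ⊆ (C.FB.fib (star s * s) : Set A) := by
    rintro y ⟨a', ha', a, ha, rfl⟩
    exact C.FB.mul_mem ha' ha
  have hTvan : ∀ y ∈ T, C.val y x = 0 := by
    rintro y ⟨a', ha', a, ha, rfl⟩
    have hyfib : a' * a ∈ C.FB.fib (star s * s) := C.FB.mul_mem ha' ha
    have hsq := C.val_star_mul_self he hyfib x
    have hregroup : star (a' * a) * (a' * a) = star a * (star a' * a') * a := by
      rw [star_mul]; simp [mul_assoc]
    have hcb := C.conj_bound ha' ha x
    have hdom0 : (C.val (star a * a) x).re = 0 := by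
      have h1 := hcon a ha
      have h2 := (C.hval_pos ha x).2
      simp only [domA, Set.mem_setOf_eq, not_lt] at h1
      linarith
    rw [hdom0, mul_zero] at hcb
    have h3 : (C.val (star (a' * a) * (a' * a)) x).re ≤ 0 := by rw [hregroup]; exact hcb
    rw [hsq, Complex.ofReal_re] at h3
    have h4 : ‖C.val (a' * a) x‖ ^ 2 = 0 := le_antisymm h3 (sq_nonneg _)
    have h5 : ‖C.val (a' * a) x‖ = 0 := by nlinarith [norm_nonneg (C.val (a' * a) x)]
    exact norm_eq_zero.mp h5
  exact hb0ne (C.vanish he hTfib x hTvan (C.hsat (star s) s hb0))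

/-- Consistency: partial maps from the same fiber agree on common domains. -/
lemma consist {s : S} {a₁ a₂ : A} (ha₁ : a₁ ∈ C.FB.fib s) (ha₂ : a₂ ∈ C.FB.fib s)
    {x : X} (hx₁ : x ∈ C.domA a₁) (hx₂ : x ∈ C.domA a₂) :
    C.tha a₁ x = C.tha a₂ x := by
  apply C.hval_sep
  intro e b'' he'' hb''
  have hδ₁ := hx₁; have hδ₂ := hx₂
  simp only [domA, Set.mem_setOf_eq] at hδ₁ hδ₂
  set δ₁ := C.val (star a₁ * a₁) x with hδ₁def
  set δ₂ := C.val (star a₂ * a₂) x with hδ₂def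
  have hδ₁ne : δ₁ ≠ 0 := ne_zero_of_re_pos hδ₁
  have hδ₂ne : δ₂ ≠ 0 := ne_zero_of_re_pos hδ₂
  have hidem1 : (star s * e * s) * (star s * e * s) = star s * e * s := ISAux.idem_conj he'' s
  have hidem2 : (star s * s) * (star s * s) = star s * s := ISAux.idem_sInv_mul s
  have hm1 : star a₁ * b'' * a₁ ∈ C.FB.fib (star s * e * s) :=
    C.FB.mul_mem (C.FB.mul_mem (C.FB.star_mem ha₁) hb'') ha₁
  have hm2 : star a₂ * b'' * a₂ ∈ C.FB.fib (star s * e * s) :=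
    C.FB.mul_mem (C.FB.mul_mem (C.FB.star_mem ha₂) hb'') ha₂
  have hmδ₁ : star a₁ * a₁ ∈ C.FB.fib (star s * s) := C.FB.mul_mem (C.FB.star_mem ha₁) ha₁
  have hmδ₂ : star a₂ * a₂ ∈ C.FB.fib (star s * s) := C.FB.mul_mem (C.FB.star_mem ha₂) ha₂
  have hcomm1 : (a₂ * star a₁) * b'' = b'' * (a₂ * star a₁) :=
    C.fib_comm (ISAux.idem_mul_sInv s) he'' (C.FB.mul_mem ha₂ (C.FB.star_mem ha₁)) hb''
  have hswap : (star a₂ * b'' * a₂) * (star a₁ * a₁) = (star a₁ * a₁) * (star a₂ * b'' * a₂) :=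
    C.fib_comm hidem1 hidem2 hm2 hmδ₁
  have hE : (star a₂ * a₂) * (star a₁ * b'' * a₁) = (star a₁ * a₁) * (star a₂ * b'' * a₂) := by
    calc (star a₂ * a₂) * (star a₁ * b'' * a₁)
        = star a₂ * (((a₂ * star a₁) * b'') * a₁) := by simp [mul_assoc]
      _ = star a₂ * ((b'' * (a₂ * star a₁)) * a₁) := by rw [hcomm1]
      _ = (star a₂ * b'' * a₂) * (star a₁ * a₁) := by simp [mul_assoc]
      _ = (star a₁ * a₁) * (star a₂ * b'' * a₂) := hswap
  have key : δ₂ * C.val (star a₁ * b'' * a₁) x = δ₁ * C.val (star a₂ * b'' * a₂) x := by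
    rw [hδ₁def, hδ₂def, ← C.hval_mul hidem2 hidem1 hmδ₂ hm1 x,
      ← C.hval_mul hidem2 hidem1 hmδ₁ hm2 x, hE]
  rw [C.htha ha₁ x hδ₁ he'' hb'', C.htha ha₂ x hδ₂ he'' hb''] at key
  have key2 : δ₁ * δ₂ * C.val b'' (C.tha a₁ x) = δ₁ * δ₂ * C.val b'' (C.tha a₂ x) := by
    rw [← hδ₁def, ← hδ₂def] at key
    ring_nf
    ring_nf at key
    linear_combination key
  exact mul_left_cancel₀ (mul_ne_zero hδ₁ne hδ₂ne) key2

/-- `θ_a` maps `dom a` into `dom (star a)`. -/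
lemma dom_star {s : S} {a : A} (ha : a ∈ C.FB.fib s) {x : X} (hx : x ∈ C.domA a) :
    C.tha a x ∈ C.domA (star a) := by
  have h := (C.htha_inv ha x hx).1
  simp only [domA, Set.mem_setOf_eq, star_star]
  exact h

/-- Composition, forward direction on domains. -/
lemma comp_mem {s t : S} {a b : A} (ha : a ∈ C.FB.fib s) (hb : b ∈ C.FB.fib t)
    {x : X} (hx : x ∈ C.domA (a * b)) :
    x ∈ C.domA b ∧ C.tha b x ∈ C.domA a := by
  have hregroup : star (a * b) * (a * b) = star b * (star a * a) * b := by
    rw [star_mul]; simp [mul_assoc]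
  have hidem : (star s * s) * (star s * s) = star s * s := ISAux.idem_sInv_mul s
  have hmaa : star a * a ∈ C.FB.fib (star s * s) := C.FB.mul_mem (C.FB.star_mem ha) ha
  have hL : 0 < (C.val (star b * (star a * a) * b) x).re := by
    have := hx; simp only [domA, Set.mem_setOf_eq] at this
    rwa [hregroup] at this
  have hcb := C.conj_bound ha hb x
  have hq0 : 0 ≤ (C.val (star b * b) x).re := (C.hval_pos hb x).2
  have hq : 0 < (C.val (star b * b) x).re := by
    rcases lt_or_eq_of_le hq0 with h | h
    · exact h
    · exfalso; rw [← h, mul_zero] at hcb; linarith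
  have hxb : x ∈ C.domA b := hq
  have heq := C.htha hb x hq hidem hmaa
  -- real versions
  have h1 := C.val_real (C.FB.mul_mem ha hb) x
  have hm : 0 < (C.val (star a * a) (C.tha b x)).re := by
    have hre : (C.val (star b * (star a * a) * b) x).re
        = (C.val (star b * b) x).re * (C.val (star a * a) (C.tha b x)).re := by
      rw [heq, C.val_real hb x, C.val_real ha (C.tha b x)]
      push_cast
      simp
    have hmge := (C.hval_pos ha (C.tha b x)).2
    nlinarith [hL, hq, hre]
  exact ⟨hxb, hm⟩

/-- Composition, converse direction on domains. -/
lemma comp_mem' {s t : S} {a b : A} (ha : a ∈ C.FB.fib s) (hb : b ∈ C.FB.fib t)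
    {x : X} (hxb : x ∈ C.domA b) (hya : C.tha b x ∈ C.domA a) :
    x ∈ C.domA (a * b) := by
  have hregroup : star (a * b) * (a * b) = star b * (star a * a) * b := by
    rw [star_mul]; simp [mul_assoc]
  have hidem : (star s * s) * (star s * s) = star s * s := ISAux.idem_sInv_mul s
  have hmaa : star a * a ∈ C.FB.fib (star s * s) := C.FB.mul_mem (C.FB.star_mem ha) ha
  have hq : 0 < (C.val (star b * b) x).re := hxb
  have hm : 0 < (C.val (star a * a) (C.tha b x)).re := hya
  have heq := C.htha hb x hq hidem hmaa
  simp only [domA, Set.mem_setOf_eq]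
  rw [hregroup]
  have hre : (C.val (star b * (star a * a) * b) x).re
      = (C.val (star b * b) x).re * (C.val (star a * a) (C.tha b x)).re := by
    rw [heq, C.val_real hb x, C.val_real ha (C.tha b x)]
    push_cast
    simp
  rw [hre]
  exact mul_pos hq hm

/-- Composition of the partial maps. -/
lemma comp_val {s t : S} {a b : A} (ha : a ∈ C.FB.fib s) (hb : b ∈ C.FB.fib t)
    {x : X} (hxb : x ∈ C.domA b) (hya : C.tha b x ∈ C.domA a) :
    C.tha (a * b) x = C.tha a (C.tha b x) := by
  have hxab : x ∈ C.domA (a * b) := C.comp_mem' ha hb hxb hya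
  have hregroup : star (a * b) * (a * b) = star b * (star a * a) * b := by
    rw [star_mul]; simp [mul_assoc]
  have hidem : (star s * s) * (star s * s) = star s * s := ISAux.idem_sInv_mul s
  have hmaa : star a * a ∈ C.FB.fib (star s * s) := C.FB.mul_mem (C.FB.star_mem ha) ha
  apply C.hval_sep
  intro e b'' he'' hb''
  set y := C.tha b x with hy
  have hconj_idem : (star s * e * s) * (star s * e * s) = star s * e * s :=
    ISAux.idem_conj he'' s
  have hconj_mem : star a * b'' * a ∈ C.FB.fib (star s * e * s) :=
    C.FB.mul_mem (C.FB.mul_mem (C.FB.star_mem ha) hb'') ha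
  have e1 := C.htha (C.FB.mul_mem ha hb) x hxab he'' hb''
  have e2 : star (a * b) * b'' * (a * b) = star b * (star a * b'' * a) * b := by
    rw [star_mul]; simp [mul_assoc]
  have e3 := C.htha hb x hxb hconj_idem hconj_mem
  have e4 := C.htha ha y hya he'' hb''
  have e5 : C.val (star (a * b) * (a * b)) x
      = C.val (star b * b) x * C.val (star a * a) y := by
    rw [hregroup]; exact C.htha hb x hxb hidem hmaa
  have hne : C.val (star (a * b) * (a * b)) x ≠ 0 :=
    ne_zero_of_re_pos hxab
  apply mul_left_cancel₀ hne
  calc C.val (star (a * b) * (a * b)) x * C.val b'' (C.tha (a * b) x)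
      = C.val (star (a * b) * b'' * (a * b)) x := e1.symm
    _ = C.val (star b * (star a * b'' * a) * b) x := by rw [e2]
    _ = C.val (star b * b) x * C.val (star a * b'' * a) y := e3
    _ = C.val (star b * b) x * (C.val (star a * a) y * C.val b'' (C.tha a y)) := by rw [e4]
    _ = C.val (star (a * b) * (a * b)) x * C.val b'' (C.tha a y) := by rw [e5]; ring


/-- Saturation consequence for products: points of `U ((st)* (st))` lie in the domain of
some `θ_{ab}` with `a ∈ 𝒜ₛ`, `b ∈ 𝒜ₜ`. -/
lemma exists_prod_dom {s t : S} {x : X} (hx : x ∈ C.FB.U C.val (star (s * t) * (s * t))) :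
    ∃ a ∈ C.FB.fib s, ∃ b ∈ C.FB.fib t, x ∈ C.domA (a * b) := by
  obtain ⟨b0, hb0, hb0ne⟩ := hx
  by_contra hcon
  push_neg at hcon
  have he' : (star (s * t) * (s * t)) * (star (s * t) * (s * t)) = star (s * t) * (s * t) :=
    ISAux.idem_sInv_mul (s * t)
  -- step 1: generators have vanishing `a* a`-value
  have hgen0 : ∀ a ∈ C.FB.fib s, ∀ b ∈ C.FB.fib t,
      (C.val (star (a * b) * (a * b)) x).re = 0 := by
    intro a ha b hb
    have h1 := hcon a ha b hb
    simp only [domA, Set.mem_setOf_eq, not_lt] at h1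
    have h2 := (C.hval_pos (C.FB.mul_mem ha hb) x).2
    linarith
  set Tgen : Set A := {y : A | ∃ a ∈ C.FB.fib s, ∃ b ∈ C.FB.fib t, y = a * b} with hTgen
  -- step 2
  have hstep2 : ∀ v ∈ C.FB.fib (s * t), C.val (star v * v) x = 0 := by
    intro v hv
    set Tv : Set A := (fun w : A => star v * w) '' Tgen with hTv
    have hTv_fib : Tv ⊆ (C.FB.fib (star (s * t) * (s * t)) : Set A) := by
      rintro _ ⟨w, ⟨a, ha, b, hb, rfl⟩, rfl⟩
      exact C.FB.mul_mem (C.FB.star_mem hv) (C.FB.mul_mem ha hb)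
    have hTv_van : ∀ w ∈ Tv, C.val w x = 0 := by
      rintro _ ⟨w, ⟨a, ha, b, hb, rfl⟩, rfl⟩
      have hcs := C.cs hv (C.FB.mul_mem ha hb) x
      rw [hgen0 a ha b hb, mul_zero] at hcs
      have h4 : ‖C.val (star v * (a * b)) x‖ ^ 2 = 0 := le_antisymm hcs (sq_nonneg _)
      have h5 : ‖C.val (star v * (a * b)) x‖ = 0 := by
        nlinarith [norm_nonneg (C.val (star v * (a * b)) x)]
      exact norm_eq_zero.mp h5
    have hv' : v ∈ closure (↑(Submodule.span ℂ Tgen) : Set A) := C.hsat s t hv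
    have hcont : Continuous (fun w : A => star v * w) := continuous_const.mul continuous_id
    have himg : (fun w : A => star v * w) '' (↑(Submodule.span ℂ Tgen) : Set A)
        = (↑(Submodule.span ℂ Tv) : Set A) := by
      have h1 := Submodule.map_span (LinearMap.mulLeft ℂ (star v)) Tgen
      have h2 := Submodule.map_coe (LinearMap.mulLeft ℂ (star v)) (Submodule.span ℂ Tgen)
      have h3 : ⇑(LinearMap.mulLeft ℂ (star v)) = (fun w : A => star v * w) := by
        funext w; simp [LinearMap.mulLeft_apply]
      rw [← h3, ← h2, h1, hTv, h3]
    have hmem : star v * v ∈ closure (↑(Submodule.span ℂ Tv) : Set A) := by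
      have h1 : star v * v ∈ (fun w : A => star v * w) '' closure (↑(Submodule.span ℂ Tgen) : Set A) :=
        ⟨v, hv', rfl⟩
      have h2 := image_closure_subset_closure_image hcont h1
      rwa [himg] at h2
    exact C.vanish he' hTv_fib x hTv_van hmem
  -- step 3: generators of the saturation of the idempotent fiber vanish
  set T' : Set A := {y : A | ∃ u ∈ C.FB.fib (star (s * t)), ∃ v ∈ C.FB.fib (s * t), y = u * v}
    with hT'
  have hT'fib : T' ⊆ (C.FB.fib (star (s * t) * (s * t)) : Set A) := by
    rintro _ ⟨u, hu, v, hv, rfl⟩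
    exact C.FB.mul_mem hu hv
  have hT'van : ∀ y ∈ T', C.val y x = 0 := by
    rintro _ ⟨u, hu, v, hv, rfl⟩
    have huv : u * v ∈ C.FB.fib (star (s * t) * (s * t)) := C.FB.mul_mem hu hv
    have hsq := C.val_star_mul_self he' huv x
    have hregroup : star (u * v) * (u * v) = star v * (star u * u) * v := by
      rw [star_mul]; simp [mul_assoc]
    have hcb := C.conj_bound hu hv x
    have hv0 : (C.val (star v * v) x).re = 0 := by rw [hstep2 v hv]; simp
    rw [hv0, mul_zero] at hcb
    have h3 : (C.val (star (u * v) * (u * v)) x).re ≤ 0 := by rw [hregroup]; exact hcb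
    rw [hsq, Complex.ofReal_re] at h3
    have h4 : ‖C.val (u * v) x‖ ^ 2 = 0 := le_antisymm h3 (sq_nonneg _)
    have h5 : ‖C.val (u * v) x‖ = 0 := by nlinarith [norm_nonneg (C.val (u * v) x)]
    exact norm_eq_zero.mp h5
  exact hb0ne (C.vanish he' hT'fib x hT'van (C.hsat (star (s * t)) (s * t) hb0))


open Classical in
/-- The glued partial map. -/
noncomputable def thfun (s : S) (x : X) : X :=
  if h : ∃ a, a ∈ C.FB.fib s ∧ x ∈ C.domA a then C.tha h.choose x else x

lemma thfun_spec {s : S} {a : A} (ha : a ∈ C.FB.fib s) {x : X} (hx : x ∈ C.domA a) :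
    C.thfun s x = C.tha a x := by
  have hex : ∃ a', a' ∈ C.FB.fib s ∧ x ∈ C.domA a' := ⟨a, ha, hx⟩
  rw [thfun, dif_pos hex]
  exact C.consist hex.choose_spec.1 ha hex.choose_spec.2 hx

lemma U_open {e : S} (he : e * e = e) : IsOpen (C.FB.U C.val e) := by
  have hset : C.FB.U C.val e = ⋃ b : C.FB.fib e, {x : X | C.val b x ≠ 0} := by
    ext x
    simp only [FellBundle.U, Set.mem_setOf_eq, Set.mem_iUnion]
    exact ⟨fun ⟨b, hb, h⟩ => ⟨⟨b, hb⟩, h⟩, fun ⟨⟨b, hb⟩, h⟩ => ⟨b, hb, h⟩⟩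
  rw [hset]
  refine isOpen_iUnion fun b => ?_
  exact isOpen_ne.preimage (C.hval_cont he b.2)

lemma domA_open {s : S} {a : A} (ha : a ∈ C.FB.fib s) : IsOpen (C.domA a) := by
  have hmem : star a * a ∈ C.FB.fib (star s * s) := C.FB.mul_mem (C.FB.star_mem ha) ha
  have hcont : Continuous fun x : X => (C.val (star a * a) x).re :=
    Complex.continuous_re.comp (C.hval_cont (ISAux.idem_sInv_mul s) hmem)
  exact isOpen_Ioi.preimage hcont

lemma thfun_maps {s : S} {x : X} (hx : x ∈ C.FB.U C.val (star s * s)) :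
    C.thfun s x ∈ C.FB.U C.val (s * star s) ∧ C.thfun (star s) (C.thfun s x) = x := by
  obtain ⟨a, ha, hxa⟩ := C.exists_dom hx
  rw [C.thfun_spec ha hxa]
  have h1 : C.tha a x ∈ C.domA (star a) := C.dom_star ha hxa
  have hstar_a : star a ∈ C.FB.fib (star s) := C.FB.star_mem ha
  constructor
  · have := C.memU_of_dom hstar_a h1
    rwa [ISAux.star_star] at this
  · rw [C.thfun_spec hstar_a h1]
    exact (C.htha_inv ha x hxa).2

lemma thfun_contOn (s : S) : ContinuousOn (C.thfun s) (C.FB.U C.val (star s * s)) := by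
  intro x hx
  obtain ⟨a, ha, hxa⟩ := C.exists_dom hx
  have hopen := C.domA_open ha
  have hca : ContinuousAt (C.tha a) x := (C.htha_cont ha).continuousAt (hopen.mem_nhds hxa)
  have heq : C.thfun s =ᶠ[nhds x] C.tha a := by
    filter_upwards [hopen.mem_nhds hxa] with y hy
    exact C.thfun_spec ha hy
  exact (hca.congr heq.symm).continuousWithinAt

/-- The partial homeomorphism `θₛ`. -/
noncomputable def theta (s : S) : OpenPartialHomeomorph X X where
  toFun := C.thfun s
  invFun := C.thfun (star s)
  source := C.FB.U C.val (star s * s)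
  target := C.FB.U C.val (s * star s)
  map_source' := fun _ hx => (C.thfun_maps hx).1
  map_target' := fun x hx => by
    have hx' : x ∈ C.FB.U C.val (star (star s) * star s) := by rwa [ISAux.star_star]
    have := (C.thfun_maps hx').1
    rwa [ISAux.star_star] at this
  left_inv' := fun _ hx => (C.thfun_maps hx).2
  right_inv' := fun x hx => by
    have hx' : x ∈ C.FB.U C.val (star (star s) * star s) := by rwa [ISAux.star_star]
    have := (C.thfun_maps hx').2
    rwa [ISAux.star_star] at this
  open_source := C.U_open (ISAux.idem_sInv_mul s)
  open_target := C.U_open (ISAux.idem_mul_sInv s)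
  continuousOn_toFun := C.thfun_contOn s
  continuousOn_invFun := by
    have := C.thfun_contOn (star s)
    rwa [ISAux.star_star] at this

@[simp] lemma theta_apply (s : S) (x : X) : C.theta s x = C.thfun s x := rfl

@[simp] lemma theta_source (s : S) : (C.theta s).source = C.FB.U C.val (star s * s) := rfl

lemma theta_trans_source (s t : S) :
    ((C.theta t).trans (C.theta s)).source = (C.theta (s * t)).source := by
  rw [OpenPartialHomeomorph.trans_source]
  ext x
  simp only [Set.mem_inter_iff, Set.mem_preimage, theta_source, theta_apply]
  constructor
  · rintro ⟨hxt, hxs⟩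
    obtain ⟨b, hb, hxb⟩ := C.exists_dom hxt
    rw [C.thfun_spec hb hxb] at hxs
    obtain ⟨a, ha, hya⟩ := C.exists_dom hxs
    have hab : x ∈ C.domA (a * b) := C.comp_mem' ha hb hxb hya
    exact C.memU_of_dom (C.FB.mul_mem ha hb) hab
  · intro hx
    obtain ⟨a, ha, b, hb, hab⟩ := C.exists_prod_dom hx
    obtain ⟨hxb, hya⟩ := C.comp_mem ha hb hab
    refine ⟨C.memU_of_dom hb hxb, ?_⟩
    rw [C.thfun_spec hb hxb]
    exact C.memU_of_dom ha hya

lemma theta_trans_apply (s t : S) {x : X} (hx : x ∈ ((C.theta t).trans (C.theta s)).source) :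
    ((C.theta t).trans (C.theta s)) x = C.theta (s * t) x := by
  rw [C.theta_trans_source, theta_source] at hx
  obtain ⟨a, ha, b, hb, hab⟩ := C.exists_prod_dom hx
  obtain ⟨hxb, hya⟩ := C.comp_mem ha hb hab
  rw [OpenPartialHomeomorph.trans_apply]
  simp only [theta_apply]
  rw [C.thfun_spec hb hxb, C.thfun_spec ha hya, C.thfun_spec (C.FB.mul_mem ha hb) hab]
  exact (C.comp_val ha hb hxb hya).symm


end BEData

/-- Let `𝓑` be a saturated semi-abelian Fell bundle over `S`, with
spectrum `X` of `C*(𝓔)` (identified via the Gelfand transform `val`) and `𝒜ₑ ≅ C₀(𝒰ₑ)`.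
Then for each `s ∈ S` there is a unique (partial) homeomorphism
`θₛ : 𝒰_{s*s} → 𝒰_{ss*}` whose restriction to `dom a` equals `θₐ` for each `a ∈ 𝒜ₛ`,
and `θₛ ∘ θₜ = θ_{st}` (as partial maps, with coinciding domains); i.e. `θ` is an action
of `S` on `X` by partial homeomorphisms. -/
theorem stmt_8 (𝓑 : FellBundle S A) (hsat : 𝓑.Saturated) (hsab : 𝓑.SemiAbelian)
    {X : Type*} [TopologicalSpace X] (val : A → X → ℂ)
    (hval_add : ∀ {e : S} {a b : A}, e * e = e → a ∈ 𝓑.fib e → b ∈ 𝓑.fib e →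
      ∀ x, val (a + b) x = val a x + val b x)
    (hval_smul : ∀ {e : S} {a : A} (c : ℂ), e * e = e → a ∈ 𝓑.fib e →
      ∀ x, val (c • a) x = c * val a x)
    (hval_mul : ∀ {e f : S} {a b : A}, e * e = e → f * f = f → a ∈ 𝓑.fib e → b ∈ 𝓑.fib f →
      ∀ x, val (a * b) x = val a x * val b x)
    (hval_star : ∀ {e : S} {a : A}, e * e = e → a ∈ 𝓑.fib e →
      ∀ x, val (star a) x = (starRingEnd ℂ) (val a x))
    (hval_inj : ∀ {e : S} {a b : A}, e * e = e → a ∈ 𝓑.fib e → b ∈ 𝓑.fib e →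
      (∀ x, val a x = val b x) → a = b)
    (hval_sep : ∀ x y : X,
      (∀ (e : S) (b : A), e * e = e → b ∈ 𝓑.fib e → val b x = val b y) → x = y)
    (hval_pos : ∀ {s : S} {a : A}, a ∈ 𝓑.fib s →
      ∀ x, (val (star a * a) x).im = 0 ∧ 0 ≤ (val (star a * a) x).re)
    (hval_cont : ∀ {e : S} {b : A}, e * e = e → b ∈ 𝓑.fib e → Continuous (val b))
    -- the partial maps `θₐ` of Lemma 3.3, together with their defining property and the
    -- fact that each is a homeomorphism of `dom a` onto `ran a`:
    (θa : A → X → X)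
    (hθa : ∀ {s : S} {a : A}, a ∈ 𝓑.fib s → ∀ x : X, 0 < (val (star a * a) x).re →
      ∀ {e : S} {b : A}, e * e = e → b ∈ 𝓑.fib e →
        val (star a * b * a) x = val (star a * a) x * val b (θa a x))
    (hθa_cont : ∀ {s : S} {a : A}, a ∈ 𝓑.fib s →
      ContinuousOn (θa a) {x : X | 0 < (val (star a * a) x).re})
    (hθa_inv : ∀ {s : S} {a : A}, a ∈ 𝓑.fib s → ∀ x : X, 0 < (val (star a * a) x).re →
      0 < (val (a * star a) (θa a x)).re ∧ θa (star a) (θa a x) = x) :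
    ∃ θ : S → OpenPartialHomeomorph X X,
      ((∀ s : S, (θ s).source = 𝓑.U val (star s * s) ∧ (θ s).target = 𝓑.U val (s * star s)) ∧
       (∀ (s : S) (a : A), a ∈ 𝓑.fib s → ∀ x : X, 0 < (val (star a * a) x).re →
          θ s x = θa a x) ∧
       (∀ s t : S, ((θ t).trans (θ s)).source = (θ (s * t)).source ∧
          ∀ x ∈ ((θ t).trans (θ s)).source, ((θ t).trans (θ s)) x = θ (s * t) x)) ∧
      -- uniqueness: any other family with the same source/target and the same
      -- restriction property agrees with `θ` as partial maps
      (∀ θ' : S → OpenPartialHomeomorph X X,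
        (∀ s : S, (θ' s).source = 𝓑.U val (star s * s) ∧
            (θ' s).target = 𝓑.U val (s * star s)) →
        (∀ (s : S) (a : A), a ∈ 𝓑.fib s → ∀ x : X, 0 < (val (star a * a) x).re →
            θ' s x = θa a x) →
        ∀ s : S, Set.EqOn (θ' s) (θ s) ((θ s).source)) := by
  let C : BEData S A X :=
    { FB := 𝓑, val := val, tha := θa, hsat := hsat,
      hval_add := hval_add, hval_smul := hval_smul, hval_mul := hval_mul,
      hval_star := hval_star, hval_inj := hval_inj, hval_sep := hval_sep,
      hval_pos := hval_pos, hval_cont := hval_cont,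
      htha := hθa, htha_cont := hθa_cont, htha_inv := hθa_inv }
  refine ⟨fun s => C.theta s, ⟨⟨fun s => ⟨rfl, rfl⟩, ?_, ?_⟩, ?_⟩⟩
  · intro s a ha x hx
    exact C.thfun_spec (a := a) ha hx
  · intro s t
    exact ⟨C.theta_trans_source s t, fun x hx => C.theta_trans_apply s t hx⟩
  · intro θ' hst hres s x hx
    obtain ⟨a, ha, hxa⟩ := C.exists_dom hx
    rw [hres s a ha x hxa]
    exact (C.thfun_spec ha hxa).symm
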